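/- Let α > 0, let η satisfy 0 < η < α/2, and let M ≥ 0. There exists a constant c > 0 depending only on α and η such that for every integer n ≥ 1 and all continuous functions uˣ, uʸ : [0,∞) → ℂ with |uˣ(y)| ≤ M e^{−ηy} and |uʸ(y)| ≤ M e^{−ηy} for all y ≥ 0, the function φ(y) = (1/2) ∫_0^y (uʸ − i uˣ)(τ) e^{nα(τ−y)} dτ − (1/2) ∫_y^∞ (uʸ + i uˣ)(τ) e^{nα(y−τ)} dτ − (1/2) ∫_0^∞ (uʸ + i uˣ)(τ) e^{−nα(τ+y)} dτ is continuously differentiable and satisfies |φ(y)| e^{ηy} ≤ c M / n and |φ'(y)| e^{ηy} ≤ c M for all y ≥ 0. -/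

import Mathlib

open MeasureTheory Set

lemma L1 {b : ℝ} (hb : 0 < b) (y : ℝ) :
    ∫ x in Ioi y, Real.exp (-(b*x)) = Real.exp (-(b*y))/b := by
  have := integral_comp_mul_left_Ioi (fun t => Real.exp (-t)) y hb
  simp only [smul_eq_mul] at this
  rw [this, integral_exp_neg_Ioi]
  ring

lemma L2 {b : ℝ} (hb : 0 < b) (y : ℝ) :
    IntegrableOn (fun x => Real.exp (-(b*x))) (Ioi y) := by
  simpa [neg_mul] using exp_neg_integrableOn_Ioi y hb

lemma L3 {c : ℝ} (hc : c ≠ 0) (y : ℝ) :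
    ∫ x in (0:ℝ)..y, Real.exp (c*x) = (Real.exp (c*y) - 1)/c := by
  have := intervalIntegral.integral_comp_mul_left (a := (0:ℝ)) (b := y) (fun x => Real.exp x) hc
  simp only [smul_eq_mul, mul_zero] at this
  rw [this, integral_exp]
  rw [Real.exp_zero]; ring

lemma L4 {M X k η : ℝ} (hM : 0 ≤ M) (hX : 0 ≤ X) (hk : 0 < k) (hkη : 0 < k - η)
    (h2 : 2*η ≤ k) : 2*M*X/(k-η) ≤ 4*M*X/k := by
  rw [div_le_div_iff₀ hkη hk]
  nlinarith [mul_nonneg (mul_nonneg hM hX) (show (0:ℝ) ≤ k-2*η by linarith)]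

lemma L5 {M X k η : ℝ} (hMX : 0 ≤ 2*M*X) (hk : 0 < k) (hη : 0 < η) :
    2*M*X/(η+k) ≤ 2*M*X/k := by
  gcongr
  linarith

lemma L6 {M a : ℝ} {n : ℕ} (hM : 0 ≤ M) (ha : 0 < a) (hn : 1 ≤ (n:ℝ)) :
    4*M/((n:ℝ)*a) ≤ (8+8/a)*M/(n:ℝ) := by
  have hn0 : (0:ℝ) < n := lt_of_lt_of_le zero_lt_one hn
  rw [div_le_div_iff₀ (by positivity) hn0]
  have h : (8+8/a)*M*((n:ℝ)*a) = (8*a+8)*(M*(n:ℝ)) := by field_simp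
  rw [h]
  nlinarith [mul_nonneg hM hn0.le]

set_option maxHeartbeats 1000000 in
theorem stmt_16 (α η : ℝ) (hα : 0 < α) (hη : 0 < η) (hηα : η < α / 2) :
    ∃ c : ℝ, 0 < c ∧
      ∀ M : ℝ, 0 ≤ M → ∀ n : ℕ, 1 ≤ n →
        ∀ ux uy : ℝ → ℂ, ContinuousOn ux (Ici 0) → ContinuousOn uy (Ici 0) →
          (∀ y ∈ Ici (0:ℝ), ‖ux y‖ ≤ M * Real.exp (-η * y)) →
          (∀ y ∈ Ici (0:ℝ), ‖uy y‖ ≤ M * Real.exp (-η * y)) →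
          ∀ φ : ℝ → ℂ,
            (∀ y : ℝ, φ y =
              (1/2) * (∫ τ in (0:ℝ)..y,
                (uy τ - Complex.I * ux τ) * Complex.exp (((n : ℝ) * α * (τ - y) : ℝ) : ℂ))
              - (1/2) * (∫ τ in Ioi y,
                (uy τ + Complex.I * ux τ) * Complex.exp (((n : ℝ) * α * (y - τ) : ℝ) : ℂ))
              - (1/2) * ∫ τ in Ioi (0:ℝ),
                (uy τ + Complex.I * ux τ) * Complex.exp ((-((n : ℝ) * α * (τ + y)) : ℝ) : ℂ)) →
            ContDiffOn ℝ 1 φ (Ici 0) ∧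
            (∀ y ∈ Ici (0:ℝ), ‖φ y‖ * Real.exp (η * y) ≤ c * M / n) ∧
            (∀ y ∈ Ici (0:ℝ),
              ‖derivWithin φ (Ici 0) y‖ * Real.exp (η * y) ≤ c * M) := by
  refine ⟨8 + 8/α, by positivity, ?_⟩
  intro M hM n hn ux uy hcx hcy hbx hby φ hφ
  set k : ℝ := (n : ℝ) * α with hkdef
  have hn1 : (1:ℝ) ≤ (n:ℝ) := by exact_mod_cast hn
  have hkα : α ≤ k := by
    have := mul_le_mul_of_nonneg_right hn1 hα.le
    simpa [hkdef] using this
  have hk0 : 0 < k := lt_of_lt_of_le hα hkα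
  have hηk2 : η < k/2 := lt_of_lt_of_le hηα (by linarith)
  have hηk : η < k := by linarith
  have hkη : 0 < k - η := by linarith
  -- extended data
  set vx : ℝ → ℂ := fun τ => ux (max τ 0) with hvx
  set vy : ℝ → ℂ := fun τ => uy (max τ 0) with hvy
  have hmax : Continuous fun τ : ℝ => max τ 0 := continuous_id.max continuous_const
  have hmem : ∀ τ : ℝ, max τ 0 ∈ Ici (0:ℝ) := fun τ => le_max_right τ 0
  have hcvx : Continuous vx := hcx.comp_continuous hmax hmem
  have hcvy : Continuous vy := hcy.comp_continuous hmax hmem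
  have hbv : ∀ (v : ℝ → ℂ), (∀ z ∈ Ici (0:ℝ), ‖v z‖ ≤ M * Real.exp (-η * z)) →
      ∀ τ : ℝ, ‖v (max τ 0)‖ ≤ M * Real.exp (-η * τ) := by
    intro v hv τ
    refine (hv _ (hmem τ)).trans ?_
    have h1 : -η * max τ 0 ≤ -η * τ := by
      rcases le_or_gt 0 τ with h | h
      · simp [max_eq_left h]
      · have : max τ 0 = 0 := max_eq_right h.le
        rw [this]; nlinarith
    exact mul_le_mul_of_nonneg_left (Real.exp_le_exp.2 h1) hM
  have hbvx : ∀ τ : ℝ, ‖vx τ‖ ≤ M * Real.exp (-η * τ) := hbv ux hbx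
  have hbvy : ∀ τ : ℝ, ‖vy τ‖ ≤ M * Real.exp (-η * τ) := hbv uy hby
  set f : ℝ → ℂ := fun τ => vy τ - Complex.I * vx τ with hfdef
  set g : ℝ → ℂ := fun τ => vy τ + Complex.I * vx τ with hgdef
  have hcf : Continuous f := hcvy.sub (continuous_const.mul hcvx)
  have hcg : Continuous g := hcvy.add (continuous_const.mul hcvx)
  have hbf : ∀ τ : ℝ, ‖f τ‖ ≤ 2*M*Real.exp (-η*τ) := by
    intro τ
    calc ‖f τ‖ ≤ ‖vy τ‖ + ‖Complex.I * vx τ‖ := norm_sub_le _ _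
    _ = ‖vy τ‖ + ‖vx τ‖ := by rw [norm_mul, Complex.norm_I, one_mul]
    _ ≤ M * Real.exp (-η*τ) + M * Real.exp (-η*τ) := add_le_add (hbvy τ) (hbvx τ)
    _ = 2*M*Real.exp (-η*τ) := by ring
  have hbg : ∀ τ : ℝ, ‖g τ‖ ≤ 2*M*Real.exp (-η*τ) := by
    intro τ
    calc ‖g τ‖ ≤ ‖vy τ‖ + ‖Complex.I * vx τ‖ := norm_add_le _ _
    _ = ‖vy τ‖ + ‖vx τ‖ := by rw [norm_mul, Complex.norm_I, one_mul]
    _ ≤ M * Real.exp (-η*τ) + M * Real.exp (-η*τ) := add_le_add (hbvy τ) (hbvx τ)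
    _ = 2*M*Real.exp (-η*τ) := by ring
  set G : ℝ → ℂ := fun τ => g τ * ((Real.exp (-(k*τ)) : ℝ) : ℂ) with hGdef
  have hcG : Continuous G := by
    apply hcg.mul
    exact Complex.continuous_ofReal.comp (Real.continuous_exp.comp (by fun_prop))
  have hbG : ∀ τ : ℝ, ‖G τ‖ ≤ 2*M*Real.exp (-((η+k)*τ)) := by
    intro τ
    rw [hGdef]
    simp only [norm_mul, Complex.norm_real, Real.norm_eq_abs, Real.abs_exp]
    calc ‖g τ‖ * Real.exp (-(k*τ)) ≤ 2*M*Real.exp (-η*τ) * Real.exp (-(k*τ)) :=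
      mul_le_mul_of_nonneg_right (hbg τ) (Real.exp_pos _).le
    _ = 2*M*Real.exp (-((η+k)*τ)) := by rw [mul_assoc, ← Real.exp_add]; ring_nf
  have hηk0 : 0 < η + k := by linarith
  have hIG : ∀ y : ℝ, IntegrableOn G (Ioi y) := by
    intro y
    apply Integrable.mono' (((L2 hηk0 y).const_mul (2*M)))
      (hcG.aestronglyMeasurable.restrict)
    exact Filter.Eventually.of_forall fun τ => hbG τ
  set F : ℝ → ℂ := fun y => ∫ τ in (0:ℝ)..y, f τ * ((Real.exp (k*τ) : ℝ) : ℂ) with hFdef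
  set H : ℝ → ℂ := fun y => ∫ τ in (0:ℝ)..y, G τ with hHdef
  set Ig : ℂ := ∫ τ in Ioi (0:ℝ), G τ with hIgdef
  set ψ : ℝ → ℂ := fun y => (1/2) * ((Real.exp (-(k*y)) : ℝ) : ℂ) * F y
      - (1/2) * ((Real.exp (k*y) : ℝ) : ℂ) * (Ig - H y)
      - (1/2) * ((Real.exp (-(k*y)) : ℝ) : ℂ) * Ig with hψdef
  -- split of the integral
  have hsplit : ∀ y : ℝ, 0 ≤ y → Ig = H y + ∫ τ in Ioi y, G τ := by
    intro y hy
    have h1 : H y = ∫ τ in Ioc (0:ℝ) y, G τ := intervalIntegral.integral_of_le hy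
    have h2 : Ioc (0:ℝ) y ∪ Ioi y = Ioi 0 := Ioc_union_Ioi_eq_Ioi hy
    rw [hIgdef, ← h2, setIntegral_union (Ioc_disjoint_Ioi le_rfl) measurableSet_Ioi
      ((hIG 0).mono_set Ioc_subset_Ioi_self) (hIG y), h1]
  -- φ = ψ on Ici 0
  have hφψ : ∀ y ∈ Ici (0:ℝ), φ y = ψ y := by
    intro y hy
    have hy0 : (0:ℝ) ≤ y := hy
    rw [hφ y]
    have e1 : (∫ τ in (0:ℝ)..y,
        (uy τ - Complex.I * ux τ) * Complex.exp (((n : ℝ) * α * (τ - y) : ℝ) : ℂ))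
        = ((Real.exp (-(k*y)) : ℝ) : ℂ) * F y := by
      rw [hFdef, ← intervalIntegral.integral_const_mul]
      apply intervalIntegral.integral_congr
      intro τ hτ
      rw [uIcc_of_le hy0] at hτ
      have hτ0 : max τ 0 = τ := max_eq_left hτ.1
      simp only [hfdef, hvx, hvy]
      rw [hτ0, ← Complex.ofReal_exp,
        show (n:ℝ)*α*(τ-y) = k*τ + -(k*y) by rw [hkdef]; ring,
        Real.exp_add, Complex.ofReal_mul]
      ring
    have e2 : (∫ τ in Ioi y,
        (uy τ + Complex.I * ux τ) * Complex.exp (((n : ℝ) * α * (y - τ) : ℝ) : ℂ))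
        = ((Real.exp (k*y) : ℝ) : ℂ) * (Ig - H y) := by
      have : Ig - H y = ∫ τ in Ioi y, G τ := by rw [hsplit y hy0]; ring
      rw [this, ← integral_const_mul]
      apply setIntegral_congr_fun measurableSet_Ioi
      intro τ hτ
      have hτ0 : max τ 0 = τ := max_eq_left (le_trans hy0 (le_of_lt hτ))
      rw [hGdef]
      simp only [hgdef, hvx, hvy]
      rw [hτ0, ← Complex.ofReal_exp,
        show (n:ℝ)*α*(y-τ) = -(k*τ) + k*y by rw [hkdef]; ring,
        Real.exp_add, Complex.ofReal_mul]
      ring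
    have e3 : (∫ τ in Ioi (0:ℝ),
        (uy τ + Complex.I * ux τ) * Complex.exp ((-((n : ℝ) * α * (τ + y)) : ℝ) : ℂ))
        = ((Real.exp (-(k*y)) : ℝ) : ℂ) * Ig := by
      rw [hIgdef, ← integral_const_mul]
      apply setIntegral_congr_fun measurableSet_Ioi
      intro τ hτ
      have hτ0 : max τ 0 = τ := max_eq_left (le_of_lt hτ)
      rw [hGdef]
      simp only [hgdef, hvx, hvy]
      rw [hτ0, ← Complex.ofReal_exp,
        show -((n:ℝ)*α*(τ+y)) = -(k*τ) + -(k*y) by rw [hkdef]; ring,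
        Real.exp_add, Complex.ofReal_mul]
      ring
    rw [e1, e2, e3, hψdef]
    ring
  -- derivatives
  have hEneg : ∀ y : ℝ, HasDerivAt (fun x : ℝ => ((Real.exp (-(k*x)) : ℝ) : ℂ))
      ((Real.exp (-(k*y)) * -k : ℝ) : ℂ) y := by
    intro y
    simpa using (((hasDerivAt_id y).const_mul k).neg.exp).ofReal_comp
  have hEpos : ∀ y : ℝ, HasDerivAt (fun x : ℝ => ((Real.exp (k*x) : ℝ) : ℂ))
      ((Real.exp (k*y) * k : ℝ) : ℂ) y := by
    intro y
    simpa using (((hasDerivAt_id y).const_mul k).exp).ofReal_comp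
  have hcE : ∀ b : ℝ, Continuous fun x : ℝ => ((Real.exp (b*x) : ℝ) : ℂ) := by
    intro b
    exact Complex.continuous_ofReal.comp (Real.continuous_exp.comp (by fun_prop))
  have hF' : ∀ y : ℝ, HasDerivAt F (f y * ((Real.exp (k*y) : ℝ) : ℂ)) y := by
    intro y
    exact ((hcf.mul (hcE k)).integral_hasStrictDerivAt 0 y).hasDerivAt
  have hH' : ∀ y : ℝ, HasDerivAt H (G y) y := by
    intro y
    exact (hcG.integral_hasStrictDerivAt 0 y).hasDerivAt
  set D : ℝ → ℂ := fun y => (1/2 : ℂ) * f y + (1/2 : ℂ) * g y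
      - ((k : ℝ) : ℂ)/2 * (((Real.exp (-(k*y)) : ℝ) : ℂ) * F y)
      - ((k : ℝ) : ℂ)/2 * (((Real.exp (k*y) : ℝ) : ℂ) * (Ig - H y))
      + ((k : ℝ) : ℂ)/2 * (((Real.exp (-(k*y)) : ℝ) : ℂ) * Ig) with hDdef
  have hder : ∀ y : ℝ, HasDerivAt ψ (D y) y := by
    intro y
    have h := ((((hEneg y).mul (hF' y)).const_mul ((1:ℂ)/2)).sub
      (((hEpos y).mul ((hH' y).const_sub Ig)).const_mul ((1:ℂ)/2))).sub
      (((hEneg y).mul_const Ig).const_mul ((1:ℂ)/2))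
    have hfun : ψ = fun x => (1:ℂ)/2 * (((Real.exp (-(k*x)) : ℝ) : ℂ) * F x)
        - (1:ℂ)/2 * (((Real.exp (k*x) : ℝ) : ℂ) * (Ig - H x))
        - (1:ℂ)/2 * (((Real.exp (-(k*x)) : ℝ) : ℂ) * Ig) := by
      funext x; simp only [hψdef]; ring
    rw [hfun]
    refine h.congr_deriv ?_
    have hEE : (((Real.exp (-(k*y)) : ℝ) : ℂ)) * ((Real.exp (k*y) : ℝ) : ℂ) = 1 := by
      rw [← Complex.ofReal_mul, ← Real.exp_add]; norm_num
    rw [hDdef, hGdef]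
    simp only [Complex.ofReal_mul, Complex.ofReal_neg]
    linear_combination ((1:ℂ)/2) * (f y + g y) * hEE
  have hFc : Continuous F := Differentiable.continuous (fun y => (hF' y).differentiableAt)
  have hHc : Continuous H := Differentiable.continuous (fun y => (hH' y).differentiableAt)
  have hcEneg : Continuous fun x : ℝ => ((Real.exp (-(k*x)) : ℝ) : ℂ) :=
    Complex.continuous_ofReal.comp (Real.continuous_exp.comp (by fun_prop))
  have hDc : Continuous D := by
    rw [hDdef]
    exact (((((continuous_const.mul hcf).add (continuous_const.mul hcg)).sub
      (continuous_const.mul (hcEneg.mul hFc))).sub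
      (continuous_const.mul ((hcE k).mul (continuous_const.sub hHc)))).add
      (continuous_const.mul (hcEneg.mul continuous_const)))
  have hψC1 : ContDiff ℝ 1 ψ := by
    rw [contDiff_one_iff_deriv]
    refine ⟨fun y => (hder y).differentiableAt, ?_⟩
    have hde : deriv ψ = D := funext fun y => (hder y).deriv
    rw [hde]; exact hDc
  -- norms of exponentials
  have hnormE : ∀ r : ℝ, ‖((Real.exp r : ℝ) : ℂ)‖ = Real.exp r := by
    intro r; rw [Complex.norm_real, Real.norm_eq_abs, Real.abs_exp]
  -- estimate for F
  have hB1 : ∀ y : ℝ, 0 ≤ y → Real.exp (-(k*y)) * ‖F y‖ ≤ 4*M*Real.exp (-η*y)/k := by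
    intro y hy
    have hb : ∀ᵐ τ ∂(volume.restrict (Set.uIoc 0 y)),
        ‖f τ * ((Real.exp (k*τ) : ℝ) : ℂ)‖ ≤ 2*M*Real.exp ((k-η)*τ) := by
      refine Filter.Eventually.of_forall fun τ => ?_
      rw [norm_mul, hnormE]
      calc ‖f τ‖ * Real.exp (k*τ) ≤ 2*M*Real.exp (-η*τ) * Real.exp (k*τ) :=
        mul_le_mul_of_nonneg_right (hbf τ) (Real.exp_pos _).le
      _ = 2*M*Real.exp ((k-η)*τ) := by rw [mul_assoc, ← Real.exp_add]; ring_nf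
    have hint : IntervalIntegrable (fun τ => 2*M*Real.exp ((k-η)*τ)) volume 0 y :=
      Continuous.intervalIntegrable (by fun_prop) 0 y
    have h1 : ‖F y‖ ≤ |∫ τ in (0:ℝ)..y, 2*M*Real.exp ((k-η)*τ)| :=
      intervalIntegral.norm_integral_le_abs_of_norm_le hb hint
    have h2 : (∫ τ in (0:ℝ)..y, 2*M*Real.exp ((k-η)*τ))
        = 2*M*((Real.exp ((k-η)*y) - 1)/(k-η)) := by
      rw [intervalIntegral.integral_const_mul, L3 (ne_of_gt hkη)]
    have hE1 : 1 ≤ Real.exp ((k-η)*y) := Real.one_le_exp (by positivity)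
    have h3 : ‖F y‖ ≤ 2*M*Real.exp ((k-η)*y)/(k-η) := by
      refine h1.trans ?_
      rw [h2, abs_of_nonneg (mul_nonneg (by linarith)
        (div_nonneg (by linarith) hkη.le))]
      rw [mul_div_assoc]
      refine mul_le_mul_of_nonneg_left ?_ (by linarith : (0:ℝ) ≤ 2*M)
      gcongr
      linarith
    have h4 : Real.exp (-(k*y)) * ‖F y‖ ≤ 2*M*Real.exp (-η*y)/(k-η) := by
      have := mul_le_mul_of_nonneg_left h3 (Real.exp_pos (-(k*y))).le
      refine this.trans_eq ?_
      rw [show Real.exp (-η*y) = Real.exp (-(k*y)) * Real.exp ((k-η)*y) by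
        rw [← Real.exp_add]; ring_nf]
      ring
    refine h4.trans ?_
    exact L4 hM (Real.exp_pos _).le hk0 hkη (by linarith)
  -- estimate for the tail integral
  have htail : ∀ y : ℝ, ‖∫ τ in Ioi y, G τ‖ ≤ 2*M*(Real.exp (-((η+k)*y))/(η+k)) := by
    intro y
    refine (norm_integral_le_integral_norm _).trans ?_
    have h1 : (∫ τ in Ioi y, ‖G τ‖) ≤ ∫ τ in Ioi y, 2*M*Real.exp (-((η+k)*τ)) :=
      integral_mono (hIG y).norm ((L2 hηk0 y).const_mul (2*M)) hbG
    refine h1.trans_eq ?_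
    rw [integral_const_mul, L1 hηk0 y]
  have hB2 : ∀ y : ℝ, 0 ≤ y → Real.exp (k*y) * ‖Ig - H y‖ ≤ 2*M*Real.exp (-η*y)/k := by
    intro y hy
    have h0 : Ig - H y = ∫ τ in Ioi y, G τ := by rw [hsplit y hy]; ring
    have h3 : Real.exp (k*y) * ‖Ig - H y‖
        ≤ Real.exp (k*y) * (2*M*(Real.exp (-((η+k)*y))/(η+k))) := by
      rw [h0]
      exact mul_le_mul_of_nonneg_left (htail y) (Real.exp_pos _).le
    refine h3.trans ?_
    rw [show Real.exp (k*y) * (2*M*(Real.exp (-((η+k)*y))/(η+k))) = 2*M*Real.exp (-η*y)/(η+k) by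
      rw [show Real.exp (-η*y) = Real.exp (k*y) * Real.exp (-((η+k)*y)) by
        rw [← Real.exp_add]; ring_nf]
      ring]
    exact L5 (by positivity) hk0 hη
  have hB3 : ‖Ig‖ ≤ 2*M/k := by
    have h1 : ‖Ig‖ ≤ 2*M*(Real.exp (-((η+k)*0))/(η+k)) := by
      rw [hIgdef, show Ioi (0:ℝ) = Ioi (0:ℝ) from rfl]
      exact htail 0
    refine h1.trans ?_
    rw [mul_zero, neg_zero, Real.exp_zero]
    have := L5 (X := (1:ℝ)) (M := M) (by linarith) hk0 hη
    simpa [div_eq_mul_inv] using this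
  have hEb : ∀ y : ℝ, 0 ≤ y → Real.exp (-(k*y)) ≤ Real.exp (-η*y) := by
    intro y hy
    apply Real.exp_le_exp.2
    nlinarith
  have hhalf : ‖((1:ℂ)/2)‖ = 1/2 := by simp
  have hkc : ‖(((k:ℝ):ℂ)/2)‖ = k/2 := by
    simp [Complex.norm_real, Real.norm_eq_abs, abs_of_pos hk0]
  -- pointwise bound for ψ
  have hbψ : ∀ y : ℝ, 0 ≤ y → ‖ψ y‖ ≤ 4*M*Real.exp (-η*y)/k := by
    intro y hy
    have hh : ‖ψ y‖ ≤ 1/2 * (Real.exp (-(k*y)) * ‖F y‖)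
        + 1/2 * (Real.exp (k*y) * ‖Ig - H y‖) + 1/2 * (Real.exp (-(k*y)) * ‖Ig‖) := by
      simp only [hψdef]
      refine (norm_sub_le _ _).trans (le_trans (add_le_add_left (norm_sub_le _ _) _) ?_)
      simp only [norm_mul, hnormE, hhalf]
      exact le_of_eq (by ring)
    have h3 : Real.exp (-(k*y)) * ‖Ig‖ ≤ Real.exp (-η*y) * (2*M/k) :=
      mul_le_mul (hEb y hy) hB3 (norm_nonneg _) (Real.exp_pos _).le
    refine hh.trans ?_
    have h1 := hB1 y hy
    have h2 := hB2 y hy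
    rw [show (4*M*Real.exp (-η*y)/k) = 1/2*(4*M*Real.exp (-η*y)/k)
        + 1/2*(2*M*Real.exp (-η*y)/k) + 1/2*(Real.exp (-η*y) * (2*M/k)) by ring]
    exact add_le_add (add_le_add (by linarith) (by linarith)) (by linarith)
  -- pointwise bound for D
  have hbD : ∀ y : ℝ, 0 ≤ y → ‖D y‖ ≤ 6*M*Real.exp (-η*y) := by
    intro y hy
    have hh : ‖D y‖ ≤ 1/2*‖f y‖ + 1/2*‖g y‖ + k/2*(Real.exp (-(k*y))*‖F y‖)
        + k/2*(Real.exp (k*y)*‖Ig - H y‖) + k/2*(Real.exp (-(k*y))*‖Ig‖) := by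
      simp only [hDdef]
      refine (norm_add_le _ _).trans (le_trans (add_le_add_left (norm_sub_le _ _) _) ?_)
      refine le_trans (add_le_add_left (add_le_add_left (norm_sub_le _ _) _) _) ?_
      refine le_trans (add_le_add_left (add_le_add_left
        (add_le_add_left (norm_add_le _ _) _) _) _) ?_
      simp only [norm_mul, hnormE, hhalf, hkc]
      exact le_of_eq (by ring)
    have e1 : k/2 * (4*M*Real.exp (-η*y)/k) = 2*M*Real.exp (-η*y) := by
      field_simp
      ring
    have e2 : k/2 * (2*M*Real.exp (-η*y)/k) = M*Real.exp (-η*y) := by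
      field_simp
    have e3 : k/2 * (Real.exp (-η*y) * (2*M/k)) = M*Real.exp (-η*y) := by
      field_simp
    have b1 : 1/2*‖f y‖ ≤ M*Real.exp (-η*y) := by have := hbf y; linarith
    have b2 : 1/2*‖g y‖ ≤ M*Real.exp (-η*y) := by have := hbg y; linarith
    have b3 : k/2*(Real.exp (-(k*y))*‖F y‖) ≤ 2*M*Real.exp (-η*y) :=
      (mul_le_mul_of_nonneg_left (hB1 y hy) (by linarith)).trans_eq e1
    have b4 : k/2*(Real.exp (k*y)*‖Ig - H y‖) ≤ M*Real.exp (-η*y) :=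
      (mul_le_mul_of_nonneg_left (hB2 y hy) (by linarith)).trans_eq e2
    have b5 : k/2*(Real.exp (-(k*y))*‖Ig‖) ≤ M*Real.exp (-η*y) := by
      refine (mul_le_mul_of_nonneg_left (mul_le_mul (hEb y hy) hB3 (norm_nonneg _)
        (Real.exp_pos _).le) (by linarith)).trans_eq e3
    linarith
  refine ⟨hψC1.contDiffOn.congr hφψ, ?_, ?_⟩
  · intro y hy
    have hy0 : (0:ℝ) ≤ y := hy
    rw [hφψ y hy]
    have h := mul_le_mul_of_nonneg_right (hbψ y hy0) (Real.exp_pos (η*y)).le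
    refine h.trans ?_
    rw [show 4*M*Real.exp (-η*y)/k * Real.exp (η*y)
        = 4*M/k * (Real.exp (-η*y) * Real.exp (η*y)) by ring, ← Real.exp_add]
    rw [show -η*y + η*y = 0 by ring, Real.exp_zero, mul_one, hkdef]
    exact L6 hM hα hn1
  · intro y hy
    have hy0 : (0:ℝ) ≤ y := hy
    have hdw : derivWithin φ (Ici 0) y = D y := by
      rw [derivWithin_congr hφψ (hφψ y hy)]
      exact ((hder y).hasDerivWithinAt).derivWithin (uniqueDiffOn_Ici 0 y hy)
    rw [hdw]
    have h := mul_le_mul_of_nonneg_right (hbD y hy0) (Real.exp_pos (η*y)).le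
    refine h.trans ?_
    rw [show 6*M*Real.exp (-η*y) * Real.exp (η*y)
        = 6*M * (Real.exp (-η*y) * Real.exp (η*y)) by ring, ← Real.exp_add]
    rw [show -η*y + η*y = 0 by ring, Real.exp_zero, mul_one]
    have h8 : 0 < 8/α := by positivity
    nlinarith
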